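/- Let R = ℂ[x,x⁻¹,y,y⁻¹], let B ⊆ R be the ℂ-subspace spanned by the monomials xⁱyʲ with i ≥ 0 and j ∈ ℤ, and let n be an odd natural number. Consider V′ = x⁻ⁿB/xB with the ℂ-bilinear pairing β′ : V′ × V′ → R/B induced by (f,g) ↦ x^{n−1}y⁻¹fg (well defined since x^{n−1}y⁻¹·(xB)·(x⁻ⁿB) ⊆ B). Then N = x^{−(n−1)/2}B/xB satisfies β′(u,v) = 0 for all u,v ∈ N, and N = {v ∈ V′ : β′(v,u) = 0 for all u ∈ N}; that is, N is a Lagrangian. (This shows the form representing L⁰(⟨xy⟩) restricted to the chart U_{σ₃} has trivial Witt class when n is odd.) -/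

import Mathlib

noncomputable section

/-- The Laurent polynomial ring `ℂ[x,x⁻¹,y,y⁻¹]` as the monoid algebra of `ℤ × ℤ` over `ℂ`. -/
abbrev LaurentR : Type := AddMonoidAlgebra ℂ (ℤ × ℤ)

/-- The monomial `xⁱyʲ`. -/
def mono (i j : ℤ) : LaurentR := AddMonoidAlgebra.single (i, j) 1

/-- `x` -/
def xx : LaurentR := mono 1 0
/-- `x⁻¹` -/
def xxInv : LaurentR := mono (-1) 0
/-- `y` -/
def yy : LaurentR := mono 0 1
/-- `y⁻¹` -/
def yyInv : LaurentR := mono 0 (-1)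

/-- `A = ℂ[x,y]`, the ℂ-subspace spanned by monomials `xⁱyʲ` with `i ≥ 0`, `j ≥ 0`. -/
def Asub : Submodule ℂ LaurentR := Submodule.span ℂ {r | ∃ (i : ℕ) (j : ℕ), r = mono i j}
/-- `B = ℂ[x,y,y⁻¹]`, the ℂ-subspace spanned by monomials `xⁱyʲ` with `i ≥ 0`, `j ∈ ℤ`. -/
def Bsub : Submodule ℂ LaurentR := Submodule.span ℂ {r | ∃ (i : ℕ) (j : ℤ), r = mono i j}
/-- `C = ℂ[x,x⁻¹,y]`, the ℂ-subspace spanned by monomials `xⁱyʲ` with `i ∈ ℤ`, `j ≥ 0`. -/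
def Csub : Submodule ℂ LaurentR := Submodule.span ℂ {r | ∃ (i : ℤ) (j : ℕ), r = mono i j}
/-- `ℂ[y,y⁻¹]`, the ℂ-subspace spanned by the monomials `yʲ`, `j ∈ ℤ`. -/
def Dy : Submodule ℂ LaurentR := Submodule.span ℂ {r | ∃ (j : ℤ), r = mono 0 j}
/-- `ℂ[x,x⁻¹]`, the ℂ-subspace spanned by the monomials `xⁱ`, `i ∈ ℤ`. -/
def Dx : Submodule ℂ LaurentR := Submodule.span ℂ {r | ∃ (i : ℤ), r = mono i 0}

/-- `u·L = {u·f : f ∈ L}` as a `ℂ`-submodule of `LaurentR`. -/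
def dil (u : LaurentR) (L : Submodule ℂ LaurentR) : Submodule ℂ LaurentR :=
  L.map (LinearMap.mulLeft ℂ u)

lemma mono_mul (i j k l : ℤ) : mono i j * mono k l = mono (i+k) (j+l) := by
  simp [mono, AddMonoidAlgebra.single_mul_single, Prod.mk_add_mk]

lemma dil_mono_Bsub (a b : ℤ) :
    dil (mono a b) Bsub = AddMonoidAlgebra.supported ℂ ℂ {p : ℤ × ℤ | a ≤ p.1} := by
  rw [dil, Bsub, Submodule.map_span, AddMonoidAlgebra.supported_eq_span_single]
  congr 1
  ext r
  constructor
  · rintro ⟨s, ⟨i, j, rfl⟩, rfl⟩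
    refine ⟨(a + i, b + j), by simp [Int.le_add_of_nonneg_right (Int.ofNat_nonneg i)], ?_⟩
    show AddMonoidAlgebra.single _ _ = mono a b * mono i j
    exact (mono_mul a b i j).symm
  · rintro ⟨⟨p, q⟩, hp, rfl⟩
    refine ⟨mono (p - a) (q - b), ⟨(p - a).toNat, q - b, by
      rw [Int.toNat_of_nonneg (by simpa using hp)]⟩, ?_⟩
    show mono a b * mono (p - a) (q - b) = AddMonoidAlgebra.single (p, q) 1
    rw [mono_mul]; congr 1 <;> ring

lemma Bsub_supported : Bsub = AddMonoidAlgebra.supported ℂ ℂ {p : ℤ × ℤ | 0 ≤ p.1} := by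
  have h := dil_mono_Bsub 0 0
  have h1 : (mono 0 0 : LaurentR) = 1 := rfl
  rw [dil, h1, show LinearMap.mulLeft ℂ (1 : LaurentR) = LinearMap.id from by ext f; simp,
    Submodule.map_id] at h
  exact h

lemma mul_supported {c d : ℤ} {f g : LaurentR}
    (hf : f ∈ AddMonoidAlgebra.supported ℂ ℂ {p : ℤ × ℤ | c ≤ p.1})
    (hg : g ∈ AddMonoidAlgebra.supported ℂ ℂ {p : ℤ × ℤ | d ≤ p.1}) :
    f * g ∈ AddMonoidAlgebra.supported ℂ ℂ {p : ℤ × ℤ | c + d ≤ p.1} := by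
  rw [AddMonoidAlgebra.mem_supported] at *
  intro p hp
  obtain ⟨q, hq, r, hr, rfl⟩ := Finset.mem_add.mp (AddMonoidAlgebra.support_coeff_mul_subset f g hp)
  have h1 : c ≤ q.1 := hf hq
  have h2 : d ≤ r.1 := hg hr
  show c + d ≤ (q + r).1
  rw [Prod.fst_add]; omega

lemma xxInv_pow (k : ℕ) : xxInv ^ k = mono (-k) 0 := by
  induction k with
  | zero => rfl
  | succ k ih =>
    rw [pow_succ, ih, xxInv, mono_mul]
    congr 1 <;> push_cast <;> ring

lemma xx_pow (k : ℕ) : xx ^ k = mono k 0 := by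
  induction k with
  | zero => rfl
  | succ k ih =>
    rw [pow_succ, ih, xx, mono_mul]
    congr 1 <;> push_cast <;> ring

lemma coeff_lemma (c d e : ℤ) (v : LaurentR) (p : ℤ × ℤ) :
    (mono c d * (v * mono e 0)).coeff ((c + e + p.1, d + p.2)) = v.coeff p := by
  rw [mul_comm v, ← mul_assoc, mono_mul, mono]
  have h := AddMonoidAlgebra.coeff_single_mul_apply v (1 : ℂ) (c + e, d + 0)
    ((c + e + p.1, d + p.2))
  rw [h, one_mul]
  congr 1
  ext <;> simp <;> ring

lemma mono_mem_supported {a b c : ℤ} (h : c ≤ a) :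
    mono a b ∈ AddMonoidAlgebra.supported ℂ ℂ {p : ℤ × ℤ | c ≤ p.1} := by
  rw [AddMonoidAlgebra.mem_supported]
  intro p hp
  have h2 := Finsupp.support_single_subset (a := ((a, b) : ℤ × ℤ)) (b := (1 : ℂ)) hp
  simp only [Finset.mem_singleton] at h2
  subst h2
  exact h

/-- For `n` odd, the submodule `N = x^{-(n-1)/2}B/xB` of `V' = x⁻ⁿB/xB` is a
Lagrangian for the pairing `β'` induced by `(f,g) ↦ x^{n-1}y⁻¹fg` with values in `R/B`:
`β'` vanishes on `N × N`, and `N` equals its own orthogonal complement in `V'`.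
(Stated at the level of lattices in `R`; `x^{n-1}` is written `xⁿ·x⁻¹`, and membership in `B`
expresses vanishing in `R/B`.) -/
theorem stmt_6 (n : ℕ) (hn : Odd n) :
    (∀ u ∈ dil (xxInv ^ ((n - 1) / 2)) Bsub, ∀ v ∈ dil (xxInv ^ ((n - 1) / 2)) Bsub,
        xx ^ n * xxInv * yyInv * (u * v) ∈ Bsub) ∧
    {v : LaurentR | v ∈ dil (xxInv ^ n) Bsub ∧
        ∀ u ∈ dil (xxInv ^ ((n - 1) / 2)) Bsub, xx ^ n * xxInv * yyInv * (v * u) ∈ Bsub}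
      = (dil (xxInv ^ ((n - 1) / 2)) Bsub : Set LaurentR) := by
  obtain ⟨k, hk⟩ := hn
  have hm : (n - 1) / 2 = k := by omega
  have hnZ : (n : ℤ) = 2 * k + 1 := by exact_mod_cast hk
  have hM : dil (xxInv ^ ((n - 1) / 2)) Bsub
      = AddMonoidAlgebra.supported ℂ ℂ {p : ℤ × ℤ | -(k : ℤ) ≤ p.1} := by
    rw [hm, xxInv_pow, dil_mono_Bsub]
  have hV : dil (xxInv ^ n) Bsub
      = AddMonoidAlgebra.supported ℂ ℂ {p : ℤ × ℤ | -(n : ℤ) ≤ p.1} := by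
    rw [xxInv_pow, dil_mono_Bsub]
  have hx : xx ^ n * xxInv * yyInv = mono ((n : ℤ) - 1) (-1) := by
    rw [xx_pow, xxInv, yyInv, mono_mul, mono_mul]
    congr 1 <;> ring
  have part1 : ∀ u ∈ dil (xxInv ^ ((n - 1) / 2)) Bsub,
      ∀ v ∈ dil (xxInv ^ ((n - 1) / 2)) Bsub,
      xx ^ n * xxInv * yyInv * (u * v) ∈ Bsub := by
    intro u hu v hv
    rw [hM] at hu hv
    rw [hx, Bsub_supported]
    have h := mul_supported (mono_mem_supported (b := -1) (le_refl ((n : ℤ) - 1)))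
      (mul_supported hu hv)
    have hset : ((n : ℤ) - 1) + (-(k : ℤ) + -(k : ℤ)) = 0 := by omega
    rwa [hset] at h
  refine ⟨part1, ?_⟩
  ext v
  simp only [Set.mem_setOf_eq, SetLike.mem_coe]
  constructor
  · rintro ⟨hv, H⟩
    rw [hV, AddMonoidAlgebra.mem_supported] at hv
    rw [hM, AddMonoidAlgebra.mem_supported]
    intro p hp
    by_contra hlt
    simp only [Set.mem_setOf_eq, not_le] at hlt
    have hpv : -(n : ℤ) ≤ p.1 := hv hp
    set u := mono (-(n : ℤ) - p.1) 0 with hu_def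
    have hu : u ∈ dil (xxInv ^ ((n - 1) / 2)) Bsub := by
      rw [hM]; exact mono_mem_supported (by omega)
    have hw := H u hu
    rw [hx, Bsub_supported, AddMonoidAlgebra.mem_supported] at hw
    have hcoeff : (mono ((n : ℤ) - 1) (-1) * (v * u)).coeff
        (((n : ℤ) - 1 + (-(n : ℤ) - p.1) + p.1, -1 + p.2)) = v.coeff p :=
      coeff_lemma ((n : ℤ) - 1) (-1) (-(n : ℤ) - p.1) v p
    have hvp : v.coeff p ≠ 0 := Finsupp.mem_support_iff.mp hp
    have hmem : (((n : ℤ) - 1 + (-(n : ℤ) - p.1) + p.1, -1 + p.2))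
        ∈ (mono ((n : ℤ) - 1) (-1) * (v * u)).coeff.support := by
      rw [Finsupp.mem_support_iff, hcoeff]; exact hvp
    have hcontr := hw hmem
    simp only [Set.mem_setOf_eq] at hcontr
    omega
  · intro hvN
    refine ⟨?_, fun u hu => part1 v hvN u hu⟩
    rw [hV, AddMonoidAlgebra.mem_supported]
    rw [hM, AddMonoidAlgebra.mem_supported] at hvN
    intro p hp
    have h := hvN hp
    simp only [Set.mem_setOf_eq] at h ⊢
    omega
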